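/- Let $0<\nu<1<p<q<r$, $A>0$, $B\geq 0$, $D>0$, $E>0$ and define $F(t) = t^{p-r}A + t^{q-r}B - t^{1-\nu-r}D$ on $(0,\infty)$. Suppose $\max_{t>0} F(t) > (r) E$ where $r=\kappa_1+\kappa_2+2$. Then there exist exactly two points $0 < t_1 < t_2$ with $F(t_1) = F(t_2) = rE$, and $F'(t_1) > 0$, $F'(t_2) < 0$. -/

import Mathlib

open Set Filter Real

theorem stmt_7 (ν p q r A B D E : ℝ)
    (hν0 : 0 < ν) (hν1 : ν < 1) (hp : 1 < p) (hpq : p < q) (hqr : q < r)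
    (hA : 0 < A) (hB : 0 ≤ B) (hD : 0 < D) (hE : 0 < E)
    (F : ℝ → ℝ)
    (hF : ∀ t : ℝ, F t = t ^ (p - r) * A + t ^ (q - r) * B - t ^ (1 - ν - r) * D)
    (hmax : ∃ t0 : ℝ, 0 < t0 ∧ (∀ t : ℝ, 0 < t → F t ≤ F t0) ∧ r * E < F t0) :
    ∃ t1 t2 : ℝ, 0 < t1 ∧ t1 < t2 ∧ F t1 = r * E ∧ F t2 = r * E ∧
      0 < deriv F t1 ∧ deriv F t2 < 0 ∧
      ∀ t : ℝ, 0 < t → F t = r * E → t = t1 ∨ t = t2 := by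
  obtain ⟨t0, ht0, ht0max, ht0E⟩ := hmax
  set e1 : ℝ := p + ν - 1 with he1def
  set e2 : ℝ := q + ν - 1 with he2def
  have he1 : 0 < e1 := by simp only [he1def]; linarith
  have he2 : 0 < e2 := by simp only [he2def]; linarith
  have hc : 0 < ν + r - 1 := by linarith
  set G : ℝ → ℝ := fun t => (ν + r - 1) * D - (r - p) * A * t ^ e1 - (r - q) * B * t ^ e2
    with hGdef
  -- G is strictly decreasing on [0,∞)
  have hGanti : ∀ s t : ℝ, 0 ≤ s → s < t → G t < G s := by
    intro s t hs hst
    have h1 : s ^ e1 < t ^ e1 := Real.rpow_lt_rpow hs hst he1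
    have h2 : s ^ e2 ≤ t ^ e2 := Real.rpow_le_rpow hs hst.le he2.le
    have hpA : 0 < (r - p) * A := mul_pos (by linarith) hA
    have hqB : 0 ≤ (r - q) * B := mul_nonneg (by linarith) hB
    have := mul_lt_mul_of_pos_left h1 hpA
    have := mul_le_mul_of_nonneg_left h2 hqB
    simp only [hGdef]
    nlinarith
  -- continuity of G
  have hGcont : Continuous G := by
    have c1 : Continuous fun t : ℝ => t ^ e1 :=
      continuous_iff_continuousAt.2 fun x => Real.continuousAt_rpow_const x e1 (Or.inr he1.le)
    have c2 : Continuous fun t : ℝ => t ^ e2 :=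
      continuous_iff_continuousAt.2 fun x => Real.continuousAt_rpow_const x e2 (Or.inr he2.le)
    simp only [hGdef]
    fun_prop
  have hG0 : 0 < G 0 := by
    simp only [hGdef, Real.zero_rpow he1.ne', Real.zero_rpow he2.ne', mul_zero, sub_zero]
    positivity
  -- a point where G is negative
  obtain ⟨b, hb1, hbG⟩ : ∃ b : ℝ, (1:ℝ) ≤ b ∧ G b < 0 := by
    have h := (tendsto_rpow_atTop he1).eventually_gt_atTop (((ν + r - 1) * D) / ((r - p) * A))
    obtain ⟨b, hb, hb1⟩ := (h.and (eventually_ge_atTop (1:ℝ))).exists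
    refine ⟨b, hb1, ?_⟩
    have hpA : 0 < (r - p) * A := mul_pos (by linarith) hA
    have hb0 : (0:ℝ) ≤ b := by linarith
    have h2 : 0 ≤ (r - q) * B * b ^ e2 :=
      mul_nonneg (mul_nonneg (by linarith) hB) (Real.rpow_nonneg hb0 e2)
    have h1 : (ν + r - 1) * D < (r - p) * A * b ^ e1 := by
      rw [div_lt_iff₀ hpA] at hb; nlinarith
    simp only [hGdef]; linarith
  -- the critical point t⋆
  obtain ⟨ts, hts_mem, hts⟩ : ∃ ts ∈ Icc (0:ℝ) b, G ts = 0 := by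
    have h := intermediate_value_Icc' (by linarith : (0:ℝ) ≤ b) hGcont.continuousOn
    have : (0:ℝ) ∈ Icc (G b) (G 0) := ⟨hbG.le, hG0.le⟩
    obtain ⟨ts, hm, hv⟩ := h this
    exact ⟨ts, hm, hv⟩
  have hts0 : 0 < ts := by
    rcases hts_mem.1.lt_or_eq with h | h
    · exact h
    · exfalso; rw [← h] at hts; linarith
  have hGpos : ∀ x : ℝ, 0 < x → x < ts → 0 < G x := by
    intro x hx hxts; have := hGanti x ts hx.le hxts; linarith
  have hGneg : ∀ x : ℝ, ts < x → G x < 0 := by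
    intro x hxts; have := hGanti ts x hts0.le hxts; linarith
  -- derivative of F
  have hFfun : F = fun t => t ^ (p - r) * A + t ^ (q - r) * B - t ^ (1 - ν - r) * D :=
    funext hF
  have hderiv : ∀ x : ℝ, 0 < x → HasDerivAt F (x ^ (-ν - r) * G x) x := by
    intro x hx
    have h1 : HasDerivAt (fun t : ℝ => t ^ (p - r)) ((p - r) * x ^ (p - r - 1)) x :=
      Real.hasDerivAt_rpow_const (Or.inl hx.ne')
    have h2 : HasDerivAt (fun t : ℝ => t ^ (q - r)) ((q - r) * x ^ (q - r - 1)) x :=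
      Real.hasDerivAt_rpow_const (Or.inl hx.ne')
    have h3 : HasDerivAt (fun t : ℝ => t ^ (1 - ν - r)) ((1 - ν - r) * x ^ (1 - ν - r - 1)) x :=
      Real.hasDerivAt_rpow_const (Or.inl hx.ne')
    have h : HasDerivAt F ((p - r) * x ^ (p - r - 1) * A + (q - r) * x ^ (q - r - 1) * B
        - (1 - ν - r) * x ^ (1 - ν - r - 1) * D) x := by
      rw [hFfun]
      exact ((h1.mul_const A).add (h2.mul_const B)).sub (h3.mul_const D)
    convert h using 1
    have k1 : x ^ (p - r - 1) = x ^ (-ν - r) * x ^ e1 := by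
      rw [← Real.rpow_add hx, he1def]; ring_nf
    have k2 : x ^ (q - r - 1) = x ^ (-ν - r) * x ^ e2 := by
      rw [← Real.rpow_add hx, he2def]; ring_nf
    have k3 : x ^ (1 - ν - r - 1) = x ^ (-ν - r) := by ring_nf
    rw [k1, k2, k3]; simp only [hGdef]; ring
  have hderiv_eq : ∀ x : ℝ, 0 < x → deriv F x = x ^ (-ν - r) * G x := fun x hx =>
    (hderiv x hx).deriv
  -- continuity of F on positive points
  have hFcont : ∀ x : ℝ, 0 < x → ContinuousAt F x := fun x hx =>
    (hderiv x hx).differentiableAt.continuousAt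
  -- strict monotonicity on (0, ts]
  have hmono : StrictMonoOn F (Ioc 0 ts) := by
    apply strictMonoOn_of_deriv_pos (convex_Ioc 0 ts)
      (fun x hx => (hFcont x hx.1).continuousWithinAt)
    intro x hx
    rw [interior_Ioc] at hx
    rw [hderiv_eq x hx.1]
    exact mul_pos (Real.rpow_pos_of_pos hx.1 _) (hGpos x hx.1 hx.2)
  have hanti : StrictAntiOn F (Ici ts) := by
    apply strictAntiOn_of_deriv_neg (convex_Ici ts)
      (fun x hx => (hFcont x (lt_of_lt_of_le hts0 hx)).continuousWithinAt)
    intro x hx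
    rw [interior_Ici] at hx
    rw [hderiv_eq x (hts0.trans hx)]
    exact mul_neg_of_pos_of_neg (Real.rpow_pos_of_pos (hts0.trans hx) _) (hGneg x hx)
  -- F ts is the max, so F ts > r E
  have htsE : r * E < F ts := by
    rcases lt_trichotomy t0 ts with h | h | h
    · have := hmono ⟨ht0, h.le⟩ ⟨hts0, le_refl ts⟩ h; linarith
    · rwa [← h]
    · have := hanti (le_refl ts : ts ∈ Ici ts) (le_of_lt h : t0 ∈ Ici ts) h; linarith
  -- small point where F < 0
  obtain ⟨a, ha0, hats, haF⟩ : ∃ a : ℝ, 0 < a ∧ a < ts ∧ F a < r * E := by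
    set H : ℝ → ℝ := fun t => A * t ^ e1 + B * t ^ e2 - D with hHdef
    have hHcont : Continuous H := by
      have c1 : Continuous fun t : ℝ => t ^ e1 :=
        continuous_iff_continuousAt.2 fun x => Real.continuousAt_rpow_const x e1 (Or.inr he1.le)
      have c2 : Continuous fun t : ℝ => t ^ e2 :=
        continuous_iff_continuousAt.2 fun x => Real.continuousAt_rpow_const x e2 (Or.inr he2.le)
      simp only [hHdef]; fun_prop
    have hH0 : H 0 = -D := by
      simp [hHdef, Real.zero_rpow he1.ne', Real.zero_rpow he2.ne']
    have hev : ∀ᶠ x in nhds (0:ℝ), H x < 0 := by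
      have := hHcont.continuousAt (x := (0:ℝ))
      have : Tendsto H (nhds 0) (nhds (-D)) := by rw [← hH0]; exact hHcont.continuousAt
      exact this.eventually_lt_const (by linarith)
    have hev2 : ∀ᶠ x in nhds (0:ℝ), x < ts := tendsto_id.eventually_lt_const hts0
    have hev3 : ∀ᶠ x in nhdsWithin (0:ℝ) (Ioi 0), 0 < x := eventually_mem_nhdsWithin
    obtain ⟨a, ⟨haH, hats⟩, ha0⟩ :=
      (((hev.and hev2).filter_mono nhdsWithin_le_nhds).and hev3).exists
    refine ⟨a, ha0, hats, ?_⟩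
    have hFa : F a = a ^ (1 - ν - r) * H a := by
      rw [hF]
      have k1 : a ^ (p - r) = a ^ (1 - ν - r) * a ^ e1 := by
        rw [← Real.rpow_add ha0, he1def]; ring_nf
      have k2 : a ^ (q - r) = a ^ (1 - ν - r) * a ^ e2 := by
        rw [← Real.rpow_add ha0, he2def]; ring_nf
      rw [k1, k2]; simp only [hHdef]; ring
    have h1 := mul_neg_of_pos_of_neg (Real.rpow_pos_of_pos ha0 (1 - ν - r)) haH
    have h2 : 0 < r * E := mul_pos (by linarith) hE
    rw [hFa]; linarith
  -- t1 via IVT on [a, ts]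
  obtain ⟨t1, ht1mem, ht1⟩ : ∃ t1 ∈ Icc a ts, F t1 = r * E := by
    have hcont : ContinuousOn F (Icc a ts) := fun x hx =>
      (hFcont x (lt_of_lt_of_le ha0 hx.1)).continuousWithinAt
    have h := intermediate_value_Icc (le_of_lt hats) hcont
    obtain ⟨t1, hm, hv⟩ := h ⟨haF.le, htsE.le⟩
    exact ⟨t1, hm, hv⟩
  have ht10 : 0 < t1 := lt_of_lt_of_le ha0 ht1mem.1
  have ht1ts : t1 < ts := by
    rcases ht1mem.2.lt_or_eq with h | h
    · exact h
    · exfalso; rw [h] at ht1; linarith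
  -- large point where F < r E
  obtain ⟨b2, hb2ts, hb2F⟩ : ∃ b2 : ℝ, ts < b2 ∧ F b2 < r * E := by
    have hlim : Tendsto F atTop (nhds 0) := by
      rw [hFfun]
      have l1 : Tendsto (fun t : ℝ => t ^ (p - r) * A) atTop (nhds (0 * A)) := by
        have : Tendsto (fun t : ℝ => t ^ (-(r - p))) atTop (nhds 0) :=
          tendsto_rpow_neg_atTop (by linarith)
        simpa [neg_sub] using this.mul_const A
      have l2 : Tendsto (fun t : ℝ => t ^ (q - r) * B) atTop (nhds (0 * B)) := by
        have : Tendsto (fun t : ℝ => t ^ (-(r - q))) atTop (nhds 0) :=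
          tendsto_rpow_neg_atTop (by linarith)
        simpa [neg_sub] using this.mul_const B
      have l3 : Tendsto (fun t : ℝ => t ^ (1 - ν - r) * D) atTop (nhds (0 * D)) := by
        have : Tendsto (fun t : ℝ => t ^ (-(ν + r - 1))) atTop (nhds 0) :=
          tendsto_rpow_neg_atTop hc
        have h2 : (fun t : ℝ => t ^ (-(ν + r - 1))) = fun t : ℝ => t ^ (1 - ν - r) := by
          funext t; ring_nf
        rw [h2] at this
        simpa using this.mul_const D
      have := (l1.add l2).sub l3
      simpa using this
    have hrE : (0:ℝ) < r * E := by
      have : (1:ℝ) < r := by linarith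
      positivity
    have hev := hlim.eventually_lt_const hrE
    obtain ⟨b2, h1, h2⟩ := (hev.and (eventually_gt_atTop ts)).exists
    exact ⟨b2, h2, h1⟩
  obtain ⟨t2, ht2mem, ht2⟩ : ∃ t2 ∈ Icc ts b2, F t2 = r * E := by
    have hcont : ContinuousOn F (Icc ts b2) := fun x hx =>
      (hFcont x (lt_of_lt_of_le hts0 hx.1)).continuousWithinAt
    have h := intermediate_value_Icc' (le_of_lt hb2ts) hcont
    obtain ⟨t2, hm, hv⟩ := h ⟨hb2F.le, htsE.le⟩
    exact ⟨t2, hm, hv⟩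
  have ht2ts : ts < t2 := by
    rcases ht2mem.1.lt_or_eq with h | h
    · exact h
    · exfalso; rw [← h] at ht2; linarith
  have ht20 : 0 < t2 := hts0.trans ht2ts
  refine ⟨t1, t2, ht10, ht1ts.trans ht2ts, ht1, ht2, ?_, ?_, ?_⟩
  · rw [hderiv_eq t1 ht10]
    exact mul_pos (Real.rpow_pos_of_pos ht10 _) (hGpos t1 ht10 ht1ts)
  · rw [hderiv_eq t2 ht20]
    exact mul_neg_of_pos_of_neg (Real.rpow_pos_of_pos ht20 _) (hGneg t2 ht2ts)
  · intro t ht htF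
    rcases le_or_gt t ts with h | h
    · left
      exact hmono.injOn ⟨ht, h⟩ ⟨ht10, ht1ts.le⟩ (htF.trans ht1.symm)
    · right
      exact hanti.injOn (le_of_lt h) ht2mem.1 (htF.trans ht2.symm)
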